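/- For the extended sine-skewed wrapped Cauchy distribution of order 1 with μ = 0, the p-th sine moment equals β_p = (3/16)(λ³ − 4λ)(ρ^{|p+1|} − ρ^{|p−1|}) − (λ³/16)(ρ^{|p+3|} − ρ^{|p−3|}) for every integer p. -/

import Mathlib

open Real intervalIntegral MeasureTheory

namespace EssWC

lemma Dpos {ρ : ℝ} (hρ : ρ ∈ Set.Ioo (0:ℝ) 1) (θ : ℝ) :
    0 < 1 + ρ^2 - 2*ρ*Real.cos θ := by
  obtain ⟨h0, h1⟩ := hρ
  nlinarith [Real.cos_le_one θ, sq_nonneg (1 - ρ)]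

lemma contD {ρ : ℝ} : Continuous fun θ : ℝ => 1 + ρ^2 - 2*ρ*Real.cos θ := by
  continuity

lemma oneSubRhoCos_pos {ρ : ℝ} (hρ : ρ ∈ Set.Ioo (0:ℝ) 1) (θ : ℝ) :
    0 < 1 - ρ * Real.cos θ := by
  obtain ⟨h0, h1⟩ := hρ
  nlinarith [Real.cos_le_one θ]

lemma I0 {ρ : ℝ} (hρ : ρ ∈ Set.Ioo (0:ℝ) 1) :
    (∫ θ in (-π)..π, 1/(1 + ρ^2 - 2*ρ*Real.cos θ)) = 2*π/(1-ρ^2) := by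
  obtain ⟨h0, h1⟩ := hρ
  have hr2 : (1:ℝ) - ρ^2 ≠ 0 := by nlinarith
  have key : ∀ θ : ℝ, HasDerivAt
      (fun θ => (θ + 2*Real.arctan (ρ*Real.sin θ/(1 - ρ*Real.cos θ)))/(1-ρ^2))
      (1/(1 + ρ^2 - 2*ρ*Real.cos θ)) θ := by
    intro θ
    have hpos := oneSubRhoCos_pos ⟨h0, h1⟩ θ
    have hden : 1 - ρ * Real.cos θ ≠ 0 := hpos.ne'
    have hu : HasDerivAt (fun θ => ρ*Real.sin θ/(1 - ρ*Real.cos θ))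
        ((ρ*Real.cos θ*(1 - ρ*Real.cos θ) - ρ*Real.sin θ*(ρ*Real.sin θ))/(1 - ρ*Real.cos θ)^2) θ := by
      have h2 : HasDerivAt (fun θ : ℝ => ρ*Real.sin θ) (ρ*Real.cos θ) θ :=
        (Real.hasDerivAt_sin θ).const_mul ρ
      have h3 : HasDerivAt (fun θ : ℝ => 1 - ρ*Real.cos θ) (ρ*Real.sin θ) θ := by
        simpa using (((Real.hasDerivAt_cos θ).const_mul ρ).const_sub 1)
      exact h2.div h3 hden
    have ha := (Real.hasDerivAt_arctan (ρ*Real.sin θ/(1 - ρ*Real.cos θ))).comp θ hu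
    have hF := ((hasDerivAt_id θ).add (ha.const_mul 2)).div_const (1-ρ^2)
    have heq : (1 + 2*(1/(1+(ρ*Real.sin θ/(1-ρ*Real.cos θ))^2) *
          ((ρ*Real.cos θ*(1-ρ*Real.cos θ) - ρ*Real.sin θ*(ρ*Real.sin θ))/(1-ρ*Real.cos θ)^2)))/(1-ρ^2)
        = 1/(1+ρ^2-2*ρ*Real.cos θ) := by
      have hsc := Real.sin_sq_add_cos_sq θ
      have hD : (1+ρ^2-2*ρ*Real.cos θ) ≠ 0 := (Dpos ⟨h0,h1⟩ θ).ne'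
      have e1 : ρ*Real.cos θ*(1-ρ*Real.cos θ) - ρ*Real.sin θ*(ρ*Real.sin θ)
          = ρ*Real.cos θ - ρ^2 := by linear_combination (-ρ^2) * hsc
      have e2 : 1+(ρ*Real.sin θ/(1-ρ*Real.cos θ))^2
          = (1+ρ^2-2*ρ*Real.cos θ)/(1-ρ*Real.cos θ)^2 := by
        field_simp
        linear_combination ρ^2 * hsc
      rw [e1, e2]
      field_simp
      ring
    rw [← heq]
    exact hF
  rw [intervalIntegral.integral_eq_sub_of_hasDerivAt (fun θ _ => key θ)
    (((continuous_const.div contD (fun θ => (Dpos ⟨h0,h1⟩ θ).ne')).intervalIntegrable _ _))]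
  simp [Real.sin_pi, Real.cos_pi]
  ring


lemma integrable_div {ρ : ℝ} (hρ : ρ ∈ Set.Ioo (0:ℝ) 1) {g : ℝ → ℝ} (hg : Continuous g)
    (a b : ℝ) :
    IntervalIntegrable (fun θ => g θ/(1+ρ^2-2*ρ*Real.cos θ)) MeasureTheory.volume a b :=
  ((hg.div contD (fun θ => (Dpos hρ θ).ne')).intervalIntegrable _ _)

lemma cos_nat_integral {k : ℕ} (hk : k ≠ 0) :
    (∫ θ in (-π)..π, Real.cos ((k:ℝ)*θ)) = 0 := by
  have hk' : (k:ℝ) ≠ 0 := Nat.cast_ne_zero.mpr hk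
  rw [intervalIntegral.integral_comp_mul_left Real.cos hk', integral_cos]
  simp [mul_neg, Real.sin_nat_mul_pi]

noncomputable def II (ρ : ℝ) (m : ℕ) : ℝ :=
  ∫ θ in (-π)..π, Real.cos ((m:ℝ)*θ)/(1+ρ^2-2*ρ*Real.cos θ)

lemma contCosMul (c : ℝ) : Continuous fun θ : ℝ => Real.cos (c*θ) := by continuity

lemma II_rec {ρ : ℝ} (hρ : ρ ∈ Set.Ioo (0:ℝ) 1) (m : ℕ) :
    II ρ (m+2) + II ρ m = ((1+ρ^2)/ρ) * II ρ (m+1) := by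
  have hρ0 : ρ ≠ 0 := hρ.1.ne'
  have e : ∀ θ : ℝ, Real.cos (((m:ℕ)+2:ℕ)*θ)/(1+ρ^2-2*ρ*Real.cos θ)
        + Real.cos ((m:ℝ)*θ)/(1+ρ^2-2*ρ*Real.cos θ)
      = ((1+ρ^2)/ρ) * (Real.cos (((m:ℕ)+1:ℕ)*θ)/(1+ρ^2-2*ρ*Real.cos θ))
        - (1/ρ) * Real.cos (((m:ℕ)+1:ℕ)*θ) := by
    intro θ
    have hD : (1+ρ^2-2*ρ*Real.cos θ) ≠ 0 := (Dpos hρ θ).ne'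
    have hA : (((m:ℕ)+2:ℕ):ℝ)*θ = (((m:ℕ)+1:ℕ):ℝ)*θ + θ := by push_cast; ring
    have hB : (m:ℝ)*θ = (((m:ℕ)+1:ℕ):ℝ)*θ - θ := by push_cast; ring
    rw [hA, hB, Real.cos_add, Real.cos_sub]
    field_simp
    have hD' : 1 + ρ ^ 2 - cos θ * ρ * 2 ≠ 0 := by convert hD using 1; ring
    rw [div_sub_one hD', mul_div_assoc', div_left_inj' hD']
    ring
  have i1 := integrable_div hρ (g := fun θ => Real.cos (((m:ℕ)+2:ℕ)*θ)) (contCosMul _) (-π) π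
  have i2 := integrable_div hρ (g := fun θ => Real.cos ((m:ℝ)*θ)) (contCosMul _) (-π) π
  have i3 := integrable_div hρ (g := fun θ => Real.cos (((m:ℕ)+1:ℕ)*θ)) (contCosMul _) (-π) π
  have : II ρ (m+2) + II ρ m
      = ∫ θ in (-π)..π, (((1+ρ^2)/ρ) * (Real.cos (((m:ℕ)+1:ℕ)*θ)/(1+ρ^2-2*ρ*Real.cos θ))
          - (1/ρ) * Real.cos (((m:ℕ)+1:ℕ)*θ)) := by
    rw [II, II, ← intervalIntegral.integral_add i1 i2]
    exact intervalIntegral.integral_congr (fun θ _ => e θ)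
  rw [this, intervalIntegral.integral_sub (i3.const_mul _)
      (((contCosMul (((m:ℕ)+1:ℕ):ℝ)).intervalIntegrable _ _).const_mul _),
    intervalIntegral.integral_const_mul, intervalIntegral.integral_const_mul,
    cos_nat_integral (Nat.succ_ne_zero m)]
  rw [II]
  ring


lemma II_zero {ρ : ℝ} (hρ : ρ ∈ Set.Ioo (0:ℝ) 1) : II ρ 0 = 2*π/(1-ρ^2) := by
  rw [← I0 hρ, II]
  exact intervalIntegral.integral_congr (fun θ _ => by norm_num)

lemma II_one {ρ : ℝ} (hρ : ρ ∈ Set.Ioo (0:ℝ) 1) : II ρ 1 = 2*π*ρ/(1-ρ^2) := by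
  have hρ0 : ρ ≠ 0 := hρ.1.ne'
  have hr2 : (1:ℝ) - ρ^2 ≠ 0 := by nlinarith [hρ.1, hρ.2]
  have e : ∀ θ : ℝ, Real.cos (((1:ℕ):ℝ)*θ)/(1+ρ^2-2*ρ*Real.cos θ)
        + Real.cos (((1:ℕ):ℝ)*θ)/(1+ρ^2-2*ρ*Real.cos θ)
      = ((1+ρ^2)/ρ) * (1/(1+ρ^2-2*ρ*Real.cos θ)) - (1/ρ) * 1 := by
    intro θ
    have hD : (1+ρ^2-2*ρ*Real.cos θ) ≠ 0 := (Dpos hρ θ).ne'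
    push_cast
    rw [one_mul]
    field_simp
    have hD' : 1 + ρ ^ 2 - cos θ * ρ * 2 ≠ 0 := by convert hD using 1; ring
    field_simp
    ring
  have i1 := integrable_div hρ (g := fun θ => Real.cos (((1:ℕ):ℝ)*θ)) (contCosMul _) (-π) π
  have i0 := integrable_div hρ (g := fun _ : ℝ => (1:ℝ)) continuous_const (-π) π
  have key : II ρ 1 + II ρ 1
      = ((1+ρ^2)/ρ) * (2*π/(1-ρ^2)) - (1/ρ) * (2*π) := by
    rw [II, ← intervalIntegral.integral_add i1 i1,
      intervalIntegral.integral_congr (fun θ _ => e θ),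
      intervalIntegral.integral_sub (i0.const_mul _)
        (intervalIntegrable_const.const_mul _),
      intervalIntegral.integral_const_mul, intervalIntegral.integral_const_mul]
    rw [I0 hρ]
    norm_num
    left
    ring
  have h2 : II ρ 1 = (((1+ρ^2)/ρ) * (2*π/(1-ρ^2)) - (1/ρ) * (2*π))/2 := by linarith
  rw [h2]
  field_simp
  ring

lemma II_eq {ρ : ℝ} (hρ : ρ ∈ Set.Ioo (0:ℝ) 1) (m : ℕ) :
    II ρ m = 2*π*ρ^m/(1-ρ^2) := by
  have hρ0 : ρ ≠ 0 := hρ.1.ne'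
  have hr2 : (1:ℝ) - ρ^2 ≠ 0 := by nlinarith [hρ.1, hρ.2]
  have H : ∀ n : ℕ, II ρ n = 2*π*ρ^n/(1-ρ^2) ∧ II ρ (n+1) = 2*π*ρ^(n+1)/(1-ρ^2) := by
    intro n
    induction n with
    | zero => exact ⟨by simpa using II_zero hρ, by simpa using II_one hρ⟩
    | succ k ih =>
      refine ⟨ih.2, ?_⟩
      have hrec := II_rec hρ k
      rw [ih.1, ih.2] at hrec
      have : II ρ (k+2) = ((1+ρ^2)/ρ) * (2*π*ρ^(k+1)/(1-ρ^2)) - 2*π*ρ^k/(1-ρ^2) := by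
        linarith
      rw [this]
      field_simp
      ring
  exact (H m).1


lemma contK {ρ : ℝ} (hρ : ρ ∈ Set.Ioo (0:ℝ) 1) :
    Continuous fun θ : ℝ => (1-ρ^2)/(π*(1+ρ^2-2*ρ*Real.cos θ)) :=
  continuous_const.div (continuous_const.mul contD)
    (fun θ => (mul_pos Real.pi_pos (Dpos hρ θ)).ne')

lemma J_nat {ρ : ℝ} (hρ : ρ ∈ Set.Ioo (0:ℝ) 1) (n : ℕ) :
    (∫ θ in (-π)..π, Real.cos ((n:ℝ)*θ) * ((1-ρ^2)/(π*(1+ρ^2-2*ρ*Real.cos θ))))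
      = 2*ρ^n := by
  have hr2 : (1:ℝ) - ρ^2 ≠ 0 := by nlinarith [hρ.1, hρ.2]
  have hpi : π ≠ 0 := Real.pi_ne_zero
  have e : ∀ θ : ℝ, Real.cos ((n:ℝ)*θ) * ((1-ρ^2)/(π*(1+ρ^2-2*ρ*Real.cos θ)))
      = ((1-ρ^2)/π) * (Real.cos ((n:ℝ)*θ)/(1+ρ^2-2*ρ*Real.cos θ)) := by
    intro θ
    have hD : (1+ρ^2-2*ρ*Real.cos θ) ≠ 0 := (Dpos hρ θ).ne'
    field_simp
  rw [intervalIntegral.integral_congr (fun θ _ => e θ),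
    intervalIntegral.integral_const_mul]
  have : (∫ θ in (-π)..π, Real.cos ((n:ℝ)*θ)/(1+ρ^2-2*ρ*Real.cos θ)) = II ρ n := rfl
  rw [this, II_eq hρ]
  field_simp

lemma J_int {ρ : ℝ} (hρ : ρ ∈ Set.Ioo (0:ℝ) 1) (m : ℤ) :
    (∫ θ in (-π)..π, Real.cos ((m:ℝ)*θ) * ((1-ρ^2)/(π*(1+ρ^2-2*ρ*Real.cos θ))))
      = 2*ρ^m.natAbs := by
  rcases Int.natAbs_eq m with h | h
  · rw [← J_nat hρ m.natAbs]
    have e : (m:ℝ) = (m.natAbs:ℝ) := by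
      have hm : (0:ℤ) ≤ m := by omega
      rw [Nat.cast_natAbs, abs_of_nonneg hm]
    exact intervalIntegral.integral_congr (fun θ _ => by rw [e])
  · rw [← J_nat hρ m.natAbs]
    have e : ∀ θ : ℝ, Real.cos ((m:ℝ)*θ) = Real.cos ((m.natAbs:ℝ)*θ) := by
      intro θ
      have : (m:ℝ) = -(m.natAbs:ℝ) := by
        have hm : m ≤ 0 := by omega
        rw [Nat.cast_natAbs, abs_of_nonpos hm]
        push_cast
        ring
      rw [this]
      rw [show -(m.natAbs:ℝ)*θ = -((m.natAbs:ℝ)*θ) by ring, Real.cos_neg]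
    exact intervalIntegral.integral_congr (fun θ _ => by rw [e θ])

lemma odd_integral {f : ℝ → ℝ} (hf : ∀ x, f (-x) = - f x) :
    (∫ x in (-π)..π, f x) = 0 := by
  have h := intervalIntegral.integral_comp_neg (a := -π) (b := π) (f := f)
  simp only [hf, neg_neg] at h
  rw [intervalIntegral.integral_neg] at h
  linarith

lemma sin_moment_zero {ρ : ℝ} (m : ℤ) :
    (∫ θ in (-π)..π, Real.sin ((m:ℝ)*θ) * ((1-ρ^2)/(π*(1+ρ^2-2*ρ*Real.cos θ)))) = 0 := by
  apply odd_integral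
  intro x
  rw [show (m:ℝ)*(-x) = -((m:ℝ)*x) by ring, Real.sin_neg, Real.cos_neg]
  ring


end EssWC

set_option maxHeartbeats 1000000 in
open EssWC in
/-- `p`-th sine moment of the extended sine-skewed wrapped Cauchy distribution of order 1. -/
theorem essWC1_sine_moment (ρ lam : ℝ) (hρ : ρ ∈ Set.Ioo (0 : ℝ) 1)
    (hlam : lam ∈ Set.Icc (-1 : ℝ) 1) (p : ℤ) :
    (∫ θ in (-π)..π,
        Real.sin (p * θ) *
          ((1 - ρ ^ 2) / (π * (1 + ρ ^ 2 - 2 * ρ * Real.cos θ))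
            * ((-(lam * Real.sin θ) ^ 3 + 3 * (lam * Real.sin θ) + 2) / 4)))
      = (3 / 16) * (lam ^ 3 - 4 * lam) * (ρ ^ (p + 1).natAbs - ρ ^ (p - 1).natAbs)
        - (lam ^ 3 / 16) * (ρ ^ (p + 3).natAbs - ρ ^ (p - 3).natAbs) := by
  have hpt : ∀ θ : ℝ, Real.sin (p * θ) *
          ((1 - ρ ^ 2) / (π * (1 + ρ ^ 2 - 2 * ρ * Real.cos θ))
            * ((-(lam * Real.sin θ) ^ 3 + 3 * (lam * Real.sin θ) + 2) / 4))
      = (1/2) * (Real.sin ((p:ℝ) * θ) * ((1-ρ^2)/(π*(1+ρ^2-2*ρ*Real.cos θ))))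
        + ((3*lam/4 - 3*lam^3/16)/2) * (Real.cos (((p-1:ℤ):ℝ) * θ) * ((1-ρ^2)/(π*(1+ρ^2-2*ρ*Real.cos θ))))
        + (-((3*lam/4 - 3*lam^3/16)/2)) * (Real.cos (((p+1:ℤ):ℝ) * θ) * ((1-ρ^2)/(π*(1+ρ^2-2*ρ*Real.cos θ))))
        + ((lam^3/16)/2) * (Real.cos (((p-3:ℤ):ℝ) * θ) * ((1-ρ^2)/(π*(1+ρ^2-2*ρ*Real.cos θ))))
        + (-((lam^3/16)/2)) * (Real.cos (((p+3:ℤ):ℝ) * θ) * ((1-ρ^2)/(π*(1+ρ^2-2*ρ*Real.cos θ)))) := by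
    intro θ
    have h1 : ((p-1:ℤ):ℝ)*θ = (p:ℝ)*θ - θ := by push_cast; ring
    have h2 : ((p+1:ℤ):ℝ)*θ = (p:ℝ)*θ + θ := by push_cast; ring
    have h3 : ((p-3:ℤ):ℝ)*θ = (p:ℝ)*θ - 3*θ := by push_cast; ring
    have h4 : ((p+3:ℤ):ℝ)*θ = (p:ℝ)*θ + 3*θ := by push_cast; ring
    rw [h1, h2, h3, h4, Real.cos_sub, Real.cos_add, Real.cos_sub, Real.cos_add,
        Real.cos_three_mul, Real.sin_three_mul]
    ring
  rw [intervalIntegral.integral_congr (g := fun θ =>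
      (1/2) * (Real.sin ((p:ℝ) * θ) * ((1-ρ^2)/(π*(1+ρ^2-2*ρ*Real.cos θ))))
        + ((3*lam/4 - 3*lam^3/16)/2) * (Real.cos (((p-1:ℤ):ℝ) * θ) * ((1-ρ^2)/(π*(1+ρ^2-2*ρ*Real.cos θ))))
        + (-((3*lam/4 - 3*lam^3/16)/2)) * (Real.cos (((p+1:ℤ):ℝ) * θ) * ((1-ρ^2)/(π*(1+ρ^2-2*ρ*Real.cos θ))))
        + ((lam^3/16)/2) * (Real.cos (((p-3:ℤ):ℝ) * θ) * ((1-ρ^2)/(π*(1+ρ^2-2*ρ*Real.cos θ))))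
        + (-((lam^3/16)/2)) * (Real.cos (((p+3:ℤ):ℝ) * θ) * ((1-ρ^2)/(π*(1+ρ^2-2*ρ*Real.cos θ)))))
      (fun θ _ => hpt θ)]
  have iS : IntervalIntegrable
      (fun θ => Real.sin ((p:ℝ)*θ) * ((1-ρ^2)/(π*(1+ρ^2-2*ρ*Real.cos θ))))
      MeasureTheory.volume (-π) π :=
    (((Real.continuous_sin.comp (continuous_const.mul continuous_id))).mul (contK hρ)).intervalIntegrable _ _
  have iC : ∀ m : ℤ, IntervalIntegrable
      (fun θ => Real.cos ((m:ℝ) * θ) * ((1-ρ^2)/(π*(1+ρ^2-2*ρ*Real.cos θ))))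
      MeasureTheory.volume (-π) π := fun m =>
    (((Real.continuous_cos.comp (continuous_const.mul continuous_id))).mul (contK hρ)).intervalIntegrable _ _
  have I1 := iS.const_mul (1/2 : ℝ)
  have I2 := (iC (p-1)).const_mul ((3*lam/4 - 3*lam^3/16)/2)
  have I3 := (iC (p+1)).const_mul (-((3*lam/4 - 3*lam^3/16)/2))
  have I4 := (iC (p-3)).const_mul ((lam^3/16)/2)
  have I5 := (iC (p+3)).const_mul (-((lam^3/16)/2))
  rw [intervalIntegral.integral_add (((I1.add I2).add I3).add I4) I5,
      intervalIntegral.integral_add ((I1.add I2).add I3) I4,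
      intervalIntegral.integral_add (I1.add I2) I3,
      intervalIntegral.integral_add I1 I2,
      intervalIntegral.integral_const_mul, intervalIntegral.integral_const_mul,
      intervalIntegral.integral_const_mul, intervalIntegral.integral_const_mul,
      intervalIntegral.integral_const_mul,
      sin_moment_zero (ρ := ρ) p, J_int hρ (p-1), J_int hρ (p+1), J_int hρ (p-3), J_int hρ (p+3)]
  ring
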